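/- Let G be a finitely generated group acting on a set X, and let Y, Z be disjoint finite subsets of X. Then the set of elements g ∈ G such that Z ∩ gY = ∅ is left syndetic in G (i.e., finitely many left translates of this set cover G). -/

import Mathlib

/-- A crude Ramsey-type bound for monochromatic triangles with `m` colors. -/
private def ramsN : ℕ → ℕ
  | 0 => 2
  | m + 1 => (m + 1) * ramsN m + 2

/-- Finite Ramsey theorem for triangles: any coloring of pairs from a set of
size at least `ramsN m` with colors from an `m`-element set has a
monochromatic triangle. -/
private lemma mono_triangle {C : Type*} [DecidableEq C] :
    ∀ (m : ℕ) (S : Finset C) (A : Finset ℕ) (c : ℕ → ℕ → C),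
      S.card = m → (∀ i ∈ A, ∀ j ∈ A, i < j → c i j ∈ S) → ramsN m ≤ A.card →
      ∃ i ∈ A, ∃ j ∈ A, ∃ k ∈ A, i < j ∧ j < k ∧ c i j = c i k ∧ c i j = c j k := by
  intro m
  induction m with
  | zero =>
    intro S A c hS hmap hcard
    have h2 : 1 < A.card := by simp only [ramsN] at hcard; omega
    obtain ⟨a, ha, b, hb, hab⟩ := Finset.one_lt_card.mp h2
    rcases lt_or_gt_of_ne hab with h | h
    · exact absurd (hmap a ha b hb h) (by simp [Finset.card_eq_zero.mp hS])
    · exact absurd (hmap b hb a ha h) (by simp [Finset.card_eq_zero.mp hS])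
  | succ m ih =>
    intro S A c hS hmap hcard
    have hA0 : A.Nonempty := by
      apply Finset.card_pos.mp
      have : 0 < ramsN (m + 1) := by simp [ramsN]
      omega
    set a := A.min' hA0 with ha_def
    have haA : a ∈ A := A.min'_mem hA0
    set A' := A.erase a with hA'_def
    have hA'card : (m + 1) * ramsN m + 1 ≤ A'.card := by
      have h2 : A'.card = A.card - 1 := Finset.card_erase_of_mem haA
      have h1 : ramsN (m + 1) = (m + 1) * ramsN m + 2 := rfl
      omega
    have haltA' : ∀ j ∈ A', a < j := by
      intro j hj
      have hjA : j ∈ A := Finset.mem_of_mem_erase hj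
      have hne : j ≠ a := Finset.ne_of_mem_erase hj
      exact lt_of_le_of_ne (A.min'_le j hjA) (Ne.symm hne)
    have hmaps : ∀ j ∈ A', c a j ∈ S := fun j hj =>
      hmap a haA j (Finset.mem_of_mem_erase hj) (haltA' j hj)
    have hpig : ∃ s ∈ S, ramsN m < (A'.filter fun j => c a j = s).card := by
      apply Finset.exists_lt_card_fiber_of_mul_lt_card_of_maps_to hmaps
      rw [hS]
      omega
    obtain ⟨s0, _, hB⟩ := hpig
    set B := A'.filter fun j => c a j = s0 with hB_def
    have hBsub : ∀ j ∈ B, j ∈ A := fun j hj =>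
      Finset.mem_of_mem_erase (Finset.mem_filter.mp hj).1
    have hBcol : ∀ j ∈ B, c a j = s0 := fun j hj => (Finset.mem_filter.mp hj).2
    by_cases hcase : ∃ j ∈ B, ∃ k ∈ B, j < k ∧ c j k = s0
    · obtain ⟨j, hj, k, hk, hjk, hcjk⟩ := hcase
      refine ⟨a, haA, j, hBsub j hj, k, hBsub k hk,
        haltA' j (Finset.mem_filter.mp hj).1, hjk, ?_, ?_⟩
      · rw [hBcol j hj, hBcol k hk]
      · rw [hBcol j hj, hcjk]
    · push_neg at hcase
      have hmap' : ∀ i ∈ B, ∀ j ∈ B, i < j → c i j ∈ S.erase s0 := by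
        intro i hi j hj hij
        exact Finset.mem_erase.mpr ⟨hcase i hi j hj hij,
          hmap i (hBsub i hi) j (hBsub j hj) hij⟩
      have hScard : (S.erase s0).card = m := by
        rw [Finset.card_erase_of_mem ‹s0 ∈ S›, hS]
        omega
      obtain ⟨i, hi, j, hj, k, hk, h1, h2, h3, h4⟩ :=
        ih (S.erase s0) B c hScard hmap' (by omega)
      exact ⟨i, hBsub i hi, j, hBsub j hj, k, hBsub k hk, h1, h2, h3, h4⟩

/-- Let `G` be a finitely generated group acting on a set `X`, and let `Y, Z` be
disjoint finite subsets of `X`. Then the set of `g ∈ G` with `Z ∩ gY = ∅` is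
left syndetic: there is a finite set `F ⊆ G` such that every `g ∈ G` can be
written as `f * s` with `f ∈ F` and `s` in that set. -/
theorem syndetic_disjoint_translates {G X : Type*} [Group G] [MulAction G X]
    (hFG : Group.FG G) (Y Z : Finset X) (hdisj : Disjoint (Y : Set X) (Z : Set X)) :
    ∃ F : Finset G, ∀ g : G, ∃ f ∈ F, ∀ y ∈ Y, (f⁻¹ * g) • y ∉ Z := by
  classical
  by_contra hcon
  push_neg at hcon
  -- For every finite `F` there is a bad `g`: every `f ∈ F` fails.
  have hbad : ∀ F : Finset G, ∃ g : G, ∀ f ∈ F, ∃ y ∈ Y, (f⁻¹ * g) • y ∈ Z := by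
    intro F
    obtain ⟨g, hg⟩ := hcon F
    refine ⟨g, fun f hf => ?_⟩
    have := hg f hf
    obtain ⟨y, hy, hyz⟩ := this
    exact ⟨y, hy, by simpa using hyz⟩
  choose bad hbadspec using hbad
  -- Greedy sequence of bad elements.
  let Fs : ℕ → Finset G := fun n => Nat.rec ∅ (fun _ F => insert (bad F) F) n
  let g : ℕ → G := fun n => bad (Fs n)
  have hFs_succ : ∀ n, Fs (n + 1) = insert (g n) (Fs n) := fun n => rfl
  have hFs_mono : ∀ i j, i ≤ j → Fs i ⊆ Fs j := by
    intro i j hij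
    induction j with
    | zero => simp_all
    | succ j ihj =>
      rcases Nat.lt_or_ge i (j + 1) with h | h
      · exact (ihj (by omega)).trans (by rw [hFs_succ]; exact Finset.subset_insert _ _)
      · have : i = j + 1 := by omega
        subst this; exact Finset.Subset.refl _
  have hmem : ∀ i j, i < j → g i ∈ Fs j := by
    intro i j hij
    have h1 : g i ∈ Fs (i + 1) := by rw [hFs_succ]; exact Finset.mem_insert_self _ _
    exact hFs_mono (i + 1) j hij h1
  -- For `i < j`, `g j • Y` meets `g i • Z`; choose a witness pair.
  have key : ∀ i j : ℕ, i < j → ∃ p : X × X,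
      p.1 ∈ Y ∧ p.2 ∈ Z ∧ ((g i)⁻¹ * g j) • p.1 = p.2 := by
    intro i j hij
    obtain ⟨y, hy, hz⟩ := hbadspec (Fs j) (g i) (hmem i j hij)
    exact ⟨(y, ((g i)⁻¹ * g j) • y), hy, hz, rfl⟩
  let c : ℕ → ℕ → X × X := fun i j =>
    if h : i < j then (key i j h).choose else (key 0 1 Nat.one_pos).choose
  have hc : ∀ i j (h : i < j), (c i j).1 ∈ Y ∧ (c i j).2 ∈ Z ∧
      ((g i)⁻¹ * g j) • (c i j).1 = (c i j).2 := by
    intro i j h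
    simp only [c, dif_pos h]
    exact (key i j h).choose_spec
  -- Apply the Ramsey lemma.
  set S : Finset (X × X) := Y ×ˢ Z with hS_def
  set A : Finset ℕ := Finset.range (ramsN S.card) with hA_def
  have hmapsto : ∀ i ∈ A, ∀ j ∈ A, i < j → c i j ∈ S := by
    intro i _ j _ hij
    obtain ⟨h1, h2, _⟩ := hc i j hij
    exact Finset.mem_product.mpr ⟨h1, h2⟩
  obtain ⟨i, _, j, _, k, _, hij, hjk, e1, e2⟩ :=
    mono_triangle S.card S A c rfl hmapsto (by simp [hA_def])
  -- Extract the monochromatic pair `(y, z)` and derive `y = z`.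
  obtain ⟨hy, hz, hij_eq⟩ := hc i j hij
  obtain ⟨_, _, hik_eq⟩ := hc i k (hij.trans hjk)
  obtain ⟨_, _, hjk_eq⟩ := hc j k hjk
  rw [← e1] at hik_eq
  rw [← e2] at hjk_eq
  set y := (c i j).1
  set z := (c i j).2
  -- `(g i)⁻¹ * g j` sends `y` to `z` and fixes `z`.
  have hfix : ((g i)⁻¹ * g j) • z = z := by
    calc ((g i)⁻¹ * g j) • z = ((g i)⁻¹ * g j) • (((g j)⁻¹ * g k) • y) := by
          rw [hjk_eq]
      _ = ((g i)⁻¹ * g k) • y := by rw [smul_smul]; congr 1; group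
      _ = z := hik_eq
  have hyz : y = z := by
    have : ((g i)⁻¹ * g j) • y = ((g i)⁻¹ * g j) • z := by rw [hij_eq, hfix]
    exact smul_left_cancel _ this
  have hzY : y ∈ (Z : Set X) := by rw [hyz]; exact_mod_cast hz
  exact Set.disjoint_left.mp hdisj (by exact_mod_cast hy) hzY
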